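/- For every k ≥ 1, the number of triples (x, y, z) ∈ (Z_{2^k})^3 with x^2 + y^2 + z^2 = 0 in Z_{2^k} equals 2^{3k/2} if k is even and 2^{(3k+1)/2} if k is odd. -/

import Mathlib

namespace Stmt15

lemma zmod4_even : ∀ x y z : ZMod 4, x^2+y^2+z^2 = 0 →
    x.val % 2 = 0 ∧ y.val % 2 = 0 ∧ z.val % 2 = 0 := by decide

lemma neZero_pow (k : ℕ) : NeZero (2^k : ℕ) := ⟨pow_ne_zero _ two_ne_zero⟩

lemma sol_iff {n : ℕ} [NeZero n] (x y z : ZMod n) :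
    x^2 + y^2 + z^2 = 0 ↔ n ∣ x.val^2 + y.val^2 + z.val^2 := by
  have h : ((x.val^2 + y.val^2 + z.val^2 : ℕ) : ZMod n) = x^2 + y^2 + z^2 := by
    push_cast
    simp [ZMod.natCast_val, ZMod.cast_id]
  rw [← h, ZMod.natCast_eq_zero_iff]

section
variable (k : ℕ)

/-- solutions are all even mod 2^(k+2) -/
lemma sol_even (x y z : ZMod (2^(k+2))) (h : x^2 + y^2 + z^2 = 0) :
    x.val % 2 = 0 ∧ y.val % 2 = 0 ∧ z.val % 2 = 0 := by
  haveI : NeZero (2^(k+2) : ℕ) := neZero_pow _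
  have hdvd : (4 : ℕ) ∣ 2^(k+2) := by
    have : (4:ℕ) = 2^2 := by norm_num
    rw [this]; exact pow_dvd_pow 2 (by omega)
  rw [sol_iff] at h
  have h4 : (4:ℕ) ∣ x.val^2 + y.val^2 + z.val^2 := dvd_trans hdvd h
  have := zmod4_even (x.val : ZMod 4) (y.val : ZMod 4) (z.val : ZMod 4) (by
    have : (((x.val^2 + y.val^2 + z.val^2 : ℕ)) : ZMod 4) = 0 :=
      (ZMod.natCast_eq_zero_iff _ 4).2 h4
    push_cast at this
    convert this using 2 <;> ring)
  simp only [ZMod.val_natCast] at this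
  omega

def dn (x : ZMod (2^(k+2))) : ZMod (2^k) := ((x.val / 2 : ℕ) : ZMod (2^k))
def db (x : ZMod (2^(k+2))) : ZMod 2 := ((x.val / 2^(k+1) : ℕ) : ZMod 2)
def up (a : ZMod (2^k)) (e : ZMod 2) : ZMod (2^(k+2)) :=
  ((2 * (a.val + 2^k * e.val) : ℕ) : ZMod (2^(k+2)))

lemma up_val (a : ZMod (2^k)) (e : ZMod 2) :
    (up k a e).val = 2 * (a.val + 2^k * e.val) := by
  haveI : NeZero (2^(k+2) : ℕ) := neZero_pow _
  haveI : NeZero (2^k : ℕ) := neZero_pow _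
  have ha : a.val < 2^k := ZMod.val_lt a
  have he : e.val < 2 := ZMod.val_lt e
  have hlt : 2 * (a.val + 2^k * e.val) < 2^(k+2) := by
    have : a.val + 2^k * e.val < 2^(k+1) := by
      have : 2^k * e.val ≤ 2^k * 1 := Nat.mul_le_mul_left _ (by omega)
      have h2 : (2:ℕ)^(k+1) = 2^k + 2^k := by ring
      omega
    have h2 : (2:ℕ)^(k+2) = 2 * 2^(k+1) := by ring
    omega
  rw [up, ZMod.val_natCast, Nat.mod_eq_of_lt hlt]

lemma dn_up (a : ZMod (2^k)) (e : ZMod 2) : dn k (up k a e) = a := by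
  haveI : NeZero (2^k : ℕ) := neZero_pow _
  rw [dn, up_val]
  have h2 : 2 * (a.val + 2^k * e.val) / 2 = a.val + 2^k * e.val := by omega
  have h0 : ((2 : ZMod (2^k)))^k = 0 := by
    have := ZMod.natCast_self (2^k)
    push_cast at this
    exact this
  rw [h2]
  push_cast
  simp [ZMod.natCast_val, ZMod.cast_id, h0]

lemma db_up (a : ZMod (2^k)) (e : ZMod 2) : db k (up k a e) = e := by
  haveI : NeZero (2^k : ℕ) := neZero_pow _
  rw [db, up_val]
  have ha : a.val < 2^k := ZMod.val_lt a
  have h1 : 2 * (a.val + 2^k * e.val) / 2^(k+1) = e.val := by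
    have h2 : (2:ℕ)^(k+1) = 2 * 2^k := by ring
    rw [h2, Nat.mul_div_mul_left _ _ (by norm_num)]
    rw [Nat.add_mul_div_left _ _ (Nat.pow_pos (n := k) (by norm_num) : 0 < 2^k)]
    rw [Nat.div_eq_of_lt ha]
    omega
  rw [h1]
  simp [ZMod.natCast_val, ZMod.cast_id]

lemma up_dn (x : ZMod (2^(k+2))) (hx : x.val % 2 = 0) : up k (dn k x) (db k x) = x := by
  haveI : NeZero (2^(k+2) : ℕ) := neZero_pow _
  haveI : NeZero (2^k : ℕ) := neZero_pow _
  rw [up, dn, db]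
  simp only [ZMod.val_natCast]
  set m := x.val / 2 with hm
  have hx2 : x.val = 2 * m := by omega
  have hmlt : m < 2^(k+1) := by
    have := ZMod.val_lt x
    have h2 : (2:ℕ)^(k+2) = 2 * 2^(k+1) := by ring
    omega
  have hdiv : x.val / 2^(k+1) = m / 2^k := by
    rw [hx2]
    have h2 : (2:ℕ)^(k+1) = 2 * 2^k := by ring
    rw [h2, Nat.mul_div_mul_left _ _ (by norm_num)]
  rw [hdiv]
  have hq : m / 2^k < 2 := by
    apply Nat.div_lt_of_lt_mul
    have : (2:ℕ)^(k+1) = 2^k * 2 := by ring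
    omega
  have key : 2 * (m % 2^k + 2^k * (m / 2^k % 2)) = x.val := by
    rw [Nat.mod_eq_of_lt hq, hx2]
    have := Nat.div_add_mod m (2^k)
    omega
  rw [key]
  simp [ZMod.natCast_val, ZMod.cast_id]

lemma dn_sol (x y z : ZMod (2^(k+2))) (h : x^2 + y^2 + z^2 = 0) :
    (dn k x)^2 + (dn k y)^2 + (dn k z)^2 = 0 := by
  haveI : NeZero (2^(k+2) : ℕ) := neZero_pow _
  haveI : NeZero (2^k : ℕ) := neZero_pow _
  obtain ⟨hex, hey, hez⟩ := sol_even k x y z h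
  rw [sol_iff] at h
  set A := x.val / 2
  set B := y.val / 2
  set C := z.val / 2
  have hx2 : x.val = 2 * A := by omega
  have hy2 : y.val = 2 * B := by omega
  have hz2 : z.val = 2 * C := by omega
  have hsum : x.val^2 + y.val^2 + z.val^2 = 4 * (A^2 + B^2 + C^2) := by
    rw [hx2, hy2, hz2]; ring
  have hdvd : (2:ℕ)^k ∣ A^2 + B^2 + C^2 := by
    rw [hsum] at h
    have h4 : (2:ℕ)^(k+2) = 4 * 2^k := by ring
    rw [h4] at h
    exact (Nat.mul_dvd_mul_iff_left (by norm_num : (0:ℕ) < 4)).1 h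
  have : (((A^2 + B^2 + C^2 : ℕ)) : ZMod (2^k)) = 0 :=
    (ZMod.natCast_eq_zero_iff _ _).2 hdvd
  rw [dn, dn, dn]
  push_cast at this ⊢
  convert this using 2 <;> ring

lemma up_sol (a b c : ZMod (2^k)) (e1 e2 e3 : ZMod 2)
    (h : a^2 + b^2 + c^2 = 0) :
    (up k a e1)^2 + (up k b e2)^2 + (up k c e3)^2 = 0 := by
  haveI : NeZero (2^(k+2) : ℕ) := neZero_pow _
  haveI : NeZero (2^k : ℕ) := neZero_pow _
  rw [sol_iff] at h ⊢
  rw [up_val, up_val, up_val]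
  obtain ⟨m, hm⟩ := h
  refine ⟨m + 2 * (a.val * e1.val + b.val * e2.val + c.val * e3.val)
    + 2^k * (e1.val^2 + e2.val^2 + e3.val^2), ?_⟩
  have h1 : (2:ℕ)^(k+2) = 2^k * 4 := by ring
  have expand : (2 * (a.val + 2^k * e1.val))^2 + (2 * (b.val + 2^k * e2.val))^2
      + (2 * (c.val + 2^k * e3.val))^2
      = 4 * (a.val^2 + b.val^2 + c.val^2)
        + (2^k * 8) * (a.val * e1.val + b.val * e2.val + c.val * e3.val)
        + (2^k * (2^k * 4)) * (e1.val^2 + e2.val^2 + e3.val^2) := by ring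
  rw [expand, hm, h1]
  ring

def solEquiv : {v : ZMod (2^(k+2)) × ZMod (2^(k+2)) × ZMod (2^(k+2)) //
    v.1^2 + v.2.1^2 + v.2.2^2 = 0} ≃
    (ZMod 2 × ZMod 2 × ZMod 2) ×
    {v : ZMod (2^k) × ZMod (2^k) × ZMod (2^k) // v.1^2 + v.2.1^2 + v.2.2^2 = 0} where
  toFun v := ((db k v.1.1, db k v.1.2.1, db k v.1.2.2),
    ⟨(dn k v.1.1, dn k v.1.2.1, dn k v.1.2.2), dn_sol k _ _ _ v.2⟩)
  invFun w := ⟨(up k w.2.1.1 w.1.1, up k w.2.1.2.1 w.1.2.1, up k w.2.1.2.2 w.1.2.2),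
    up_sol k _ _ _ _ _ _ w.2.2⟩
  left_inv v := by
    obtain ⟨hex, hey, hez⟩ := sol_even k _ _ _ v.2
    ext : 1
    simp only
    ext <;> simp [up_dn k _ hex, up_dn k _ hey, up_dn k _ hez]
  right_inv w := by
    simp only
    ext <;> simp [dn_up, db_up]

lemma key : Nat.card {v : ZMod (2^(k+2)) × ZMod (2^(k+2)) × ZMod (2^(k+2)) //
      v.1^2 + v.2.1^2 + v.2.2^2 = 0} =
    8 * Nat.card {v : ZMod (2^k) × ZMod (2^k) × ZMod (2^k) //
      v.1^2 + v.2.1^2 + v.2.2^2 = 0} := by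
  rw [Nat.card_congr (solEquiv k), Nat.card_prod]
  congr 1
  simp [Nat.card_eq_fintype_card]

end

lemma main : ∀ k : ℕ,
    Nat.card {v : ZMod (2 ^ k) × ZMod (2 ^ k) × ZMod (2 ^ k) //
        v.1 ^ 2 + v.2.1 ^ 2 + v.2.2 ^ 2 = 0} =
      if Even k then 2 ^ (3 * k / 2) else 2 ^ ((3 * k + 1) / 2)
  | 0 => by
    rw [Nat.card_eq_fintype_card]
    decide
  | 1 => by
    rw [Nat.card_eq_fintype_card]
    decide
  | (k+2) => by
    rw [key k, main k]
    rcases Nat.even_or_odd k with h | h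
    · rw [if_pos h, if_pos (by rw [Nat.even_add]; simpa using h : Even (k+2))]
      have h3 : 3 * (k+2) / 2 = 3 * k / 2 + 3 := by omega
      rw [h3, pow_add]; ring
    · rw [if_neg (Nat.not_even_iff_odd.2 h),
        if_neg (Nat.not_even_iff_odd.2 (by rw [Nat.odd_add]; simpa using h : Odd (k+2)))]
      have h3 : (3 * (k+2) + 1) / 2 = (3 * k + 1) / 2 + 3 := by omega
      rw [h3, pow_add]; ring

end Stmt15

theorem stmt_15 (k : ℕ) (hk : 1 ≤ k) :
    Nat.card {v : ZMod (2 ^ k) × ZMod (2 ^ k) × ZMod (2 ^ k) //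
        v.1 ^ 2 + v.2.1 ^ 2 + v.2.2 ^ 2 = 0} =
      if Even k then 2 ^ (3 * k / 2) else 2 ^ ((3 * k + 1) / 2) := by
  exact Stmt15.main k
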